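/- Let γ ∈ Sp(4,ℝ) with λ₀ ∈ U (|λ₀|=1), λ₀ ≠ ±1, and suppose η₁, η₂ ∈ ℂ⁴ satisfy γη₁ = λ₀η₁ and γη₂ = λ₀η₂ + λ₀η₁ with ⟨η₂, Jη₁⟩ ≠ 0. Then the real part of λ̄₀ · λ₀ · (⟨Aη₁,η₁⟩/⟨η₂,Jη₁⟩ + ⟨Aη₁,η₂⟩/⟨η₁,Jη₂⟩ + ⟨Aη₂,η₁⟩/⟨η₂,Jη₁⟩ − ⟨Aη₁,η₁⟩⟨η₂,Jη₂⟩/(⟨η₂,Jη₁⟩⟨η₁,Jη₂⟩)) equals ⟨Aη₁,η₁⟩/⟨η₂,Jη₁⟩, for any real symmetric 4×4 matrix A. -/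

import Mathlib

open Matrix Complex Finset Polynomial

noncomputable section

/-- The standard symplectic form matrix `J₄ = [[0, I₂], [−I₂, 0]]` on `ℂ⁴`. -/
def J4 : Matrix (Fin 4) (Fin 4) ℂ :=
  !![0, 0, 1, 0; 0, 0, 0, 1; -1, 0, 0, 0; 0, -1, 0, 0]

/-- The standard Hermitian inner product `⟨x, y⟩ = Σⱼ xⱼ conj(yⱼ)` on `ℂ⁴`. -/
def herm (x y : Fin 4 → ℂ) : ℂ := ∑ j, x j * (starRingEnd ℂ) (y j)

/-- A complex matrix has real entries. -/
def IsRealMat (M : Matrix (Fin 4) (Fin 4) ℂ) : Prop := ∀ i j, (M i j).im = 0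

/-- A (complexified) matrix is symplectic: `Mᵀ J M = J`. -/
def IsSymp (M : Matrix (Fin 4) (Fin 4) ℂ) : Prop := Mᵀ * J4 * M = J4

/-- Componentwise complex conjugate of a vector in `ℂ⁴`. -/
def conjVec (v : Fin 4 → ℂ) : Fin 4 → ℂ := fun j => (starRingEnd ℂ) (v j)

lemma herm_eq_dot (x y : Fin 4 → ℂ) : herm x y = x ⬝ᵥ conjVec y := rfl

lemma realMat_conj {M : Matrix (Fin 4) (Fin 4) ℂ} (hM : IsRealMat M) (i j : Fin 4) :
    (starRingEnd ℂ) (M i j) = M i j := Complex.conj_eq_iff_im.mpr (hM i j)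

lemma conjVec_mulVec {M : Matrix (Fin 4) (Fin 4) ℂ} (hM : IsRealMat M) (v : Fin 4 → ℂ) :
    conjVec (M.mulVec v) = M.mulVec (conjVec v) := by
  funext i
  simp [conjVec, Matrix.mulVec, dotProduct, map_sum, realMat_conj hM]

lemma J4real : IsRealMat J4 := by
  intro i j
  fin_cases i <;> fin_cases j <;> simp [J4, Matrix.vecHead, Matrix.vecTail]

lemma J4T : J4ᵀ = -J4 := by
  ext i j
  fin_cases i <;> fin_cases j <;> simp [J4, Matrix.vecHead, Matrix.vecTail]

lemma mulVec_dot (A : Matrix (Fin 4) (Fin 4) ℂ) (x z : Fin 4 → ℂ) :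
    (A.mulVec x) ⬝ᵥ z = x ⬝ᵥ (Aᵀ.mulVec z) := by
  simp only [dotProduct, Matrix.mulVec, dotProduct, Matrix.transpose_apply,
    Finset.sum_mul, Finset.mul_sum]
  rw [Finset.sum_comm]
  exact Finset.sum_congr rfl fun i _ => Finset.sum_congr rfl fun j _ => by ring

lemma herm_conj (x y : Fin 4 → ℂ) : (starRingEnd ℂ) (herm x y) = herm y x := by
  simp [herm, map_sum, mul_comm]

lemma omega_inv {γ : Matrix (Fin 4) (Fin 4) ℂ} (hreal : IsRealMat γ) (hsymp : IsSymp γ)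
    (x y : Fin 4 → ℂ) :
    herm (γ.mulVec x) (J4.mulVec (γ.mulVec y)) = herm x (J4.mulVec y) := by
  rw [herm_eq_dot, herm_eq_dot, conjVec_mulVec J4real, conjVec_mulVec hreal,
    conjVec_mulVec J4real, mulVec_dot, Matrix.mulVec_mulVec, Matrix.mulVec_mulVec, hsymp]

lemma herm_add_left (u v w : Fin 4 → ℂ) : herm (u + v) w = herm u w + herm v w := by
  simp [herm, add_mul, Finset.sum_add_distrib]

lemma herm_smul_left (s : ℂ) (u w : Fin 4 → ℂ) : herm (s • u) w = s * herm u w := by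
  simp [herm, Finset.mul_sum, mul_assoc]

lemma herm_smul_right (s : ℂ) (u w : Fin 4 → ℂ) :
    herm u (s • w) = (starRingEnd ℂ) s * herm u w := by
  simp [herm, Finset.mul_sum]
  exact Finset.sum_congr rfl fun i _ => by ring

lemma herm_add_right (u v w : Fin 4 → ℂ) : herm u (v + w) = herm u v + herm u w := by
  simp [herm, mul_add, Finset.sum_add_distrib]

lemma herm_J_swap (x y : Fin 4 → ℂ) :
    herm (J4.mulVec x) y = - herm x (J4.mulVec y) := by
  rw [herm_eq_dot, herm_eq_dot, mulVec_dot, J4T, conjVec_mulVec J4real]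
  simp [Matrix.neg_mulVec]

lemma herm_A_swap {A : Matrix (Fin 4) (Fin 4) ℂ} (hAreal : IsRealMat A) (hAsymm : Aᵀ = A)
    (x y : Fin 4 → ℂ) : herm (A.mulVec x) y = herm x (A.mulVec y) := by
  rw [herm_eq_dot, herm_eq_dot, mulVec_dot, hAsymm, conjVec_mulVec hAreal]

lemma key (a b c d p q : ℂ) (hb : b ≠ 0)
    (hca : (starRingEnd ℂ) a = a) (hcb : (starRingEnd ℂ) b = -c)
    (hcc : (starRingEnd ℂ) c = -b) (hcd : (starRingEnd ℂ) d = -d)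
    (hcp : (starRingEnd ℂ) p = q) (hcq : (starRingEnd ℂ) q = p)
    (hbc : c = -b) :
    (((a / b + p / c + q / b - a * d / (b * c)).re : ℂ)) = a / b := by
  have hE : (a / b + p / c + q / b - a * d / (b * c)) +
      (starRingEnd ℂ) (a / b + p / c + q / b - a * d / (b * c)) = 2 * (a / b) := by
    simp only [map_add, map_sub, map_div₀, _root_.map_mul, hca, hcb, hcc, hcd, hcp, hcq]
    rw [hbc]
    simp only [neg_neg, div_neg, mul_neg, neg_mul, neg_neg]
    field_simp
    ring
  have h2 := Complex.add_conj (a / b + p / c + q / b - a * d / (b * c))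
  rw [hE] at h2
  push_cast at h2
  exact mul_left_cancel₀ two_ne_zero h2.symm

theorem stmt10 (γ : Matrix (Fin 4) (Fin 4) ℂ) (hreal : IsRealMat γ) (hsymp : IsSymp γ)
    (lam0 : ℂ) (hunit : ‖lam0‖ = 1) (h1' : lam0 ≠ 1) (h2' : lam0 ≠ -1)
    (η₁ η₂ : Fin 4 → ℂ)
    (h1 : γ.mulVec η₁ = lam0 • η₁)
    (h2 : γ.mulVec η₂ = lam0 • η₂ + lam0 • η₁)
    (hne : herm η₂ (J4.mulVec η₁) ≠ 0)
    (A : Matrix (Fin 4) (Fin 4) ℂ) (hAreal : IsRealMat A) (hAsymm : Aᵀ = A) :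
    (((starRingEnd ℂ) lam0 * lam0 *
        (herm (A.mulVec η₁) η₁ / herm η₂ (J4.mulVec η₁) +
          herm (A.mulVec η₁) η₂ / herm η₁ (J4.mulVec η₂) +
          herm (A.mulVec η₂) η₁ / herm η₂ (J4.mulVec η₁) -
          herm (A.mulVec η₁) η₁ * herm η₂ (J4.mulVec η₂) /
            (herm η₂ (J4.mulVec η₁) * herm η₁ (J4.mulVec η₂)))).re : ℂ) =
      herm (A.mulVec η₁) η₁ / herm η₂ (J4.mulVec η₁) := by
  have hu : (starRingEnd ℂ) lam0 * lam0 = 1 := by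
    rw [mul_comm, Complex.mul_conj, Complex.normSq_eq_norm_sq, hunit]
    norm_num
  have inv21 := omega_inv hreal hsymp η₂ η₁
  rw [h1, h2] at inv21
  simp only [Matrix.mulVec_smul, herm_add_left, herm_smul_left, herm_smul_right] at inv21
  have inv22 := omega_inv hreal hsymp η₂ η₂
  rw [h2] at inv22
  simp only [Matrix.mulVec_add, Matrix.mulVec_smul, herm_add_left, herm_add_right,
    herm_smul_left, herm_smul_right] at inv22
  have hca : (starRingEnd ℂ) (herm (A.mulVec η₁) η₁) = herm (A.mulVec η₁) η₁ := by
    rw [herm_conj]; exact (herm_A_swap hAreal hAsymm η₁ η₁).symm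
  have hcp : (starRingEnd ℂ) (herm (A.mulVec η₁) η₂) = herm (A.mulVec η₂) η₁ := by
    rw [herm_conj]; exact (herm_A_swap hAreal hAsymm η₂ η₁).symm
  have hcq : (starRingEnd ℂ) (herm (A.mulVec η₂) η₁) = herm (A.mulVec η₁) η₂ := by
    rw [herm_conj]; exact (herm_A_swap hAreal hAsymm η₁ η₂).symm
  have hcb : (starRingEnd ℂ) (herm η₂ (J4.mulVec η₁)) = -(herm η₁ (J4.mulVec η₂)) := by
    rw [herm_conj, herm_J_swap]
  have hcc : (starRingEnd ℂ) (herm η₁ (J4.mulVec η₂)) = -(herm η₂ (J4.mulVec η₁)) := by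
    rw [herm_conj, herm_J_swap]
  have hcd : (starRingEnd ℂ) (herm η₂ (J4.mulVec η₂)) = -(herm η₂ (J4.mulVec η₂)) := by
    rw [herm_conj, herm_J_swap]
  set a := herm (A.mulVec η₁) η₁ with hadef
  set b := herm η₂ (J4.mulVec η₁) with hbdef
  set c := herm η₁ (J4.mulVec η₂) with hcdef
  set d := herm η₂ (J4.mulVec η₂) with hddef
  set p := herm (A.mulVec η₁) η₂ with hpdef
  set q := herm (A.mulVec η₂) η₁ with hqdef
  set e := herm η₁ (J4.mulVec η₁) with hedef
  have he : e = 0 := by linear_combination inv21 - (b + e) * hu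
  have hbc : c = -b := by linear_combination inv22 - (b + c + d + e) * hu - he
  rw [hu, one_mul]
  exact key a b c d p q hne hca hcb hcc hcd hcp hcq hbc
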